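/- Let G be an infinite residually finite group with scale (Γ_n) and X the odometer. The stabilized automorphism group Aut^∞(X,G)_L = ⋃_{H ∈ I(G)} Aut(X,H)_L, the union over all finite-index subgroups H of G, satisfies Aut^∞(X,G)_L = ⋃_n Aut(X, Γ_n)_L = [[X]]_R, the topological full group of the action of X on itself by right multiplication. -/

import Mathlib

open scoped Pointwise

noncomputable section
namespace OdoPaper


variable {G : Type*} [Group G]

/-- Each finite quotient carries the discrete topology. -/
instance quotTop (Γ : Subgroup G) : TopologicalSpace (G ⧸ Γ) := ⊥
instance quotDisc (Γ : Subgroup G) : DiscreteTopology (G ⧸ Γ) := ⟨rfl⟩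

/-- The natural projection between coset spaces of nested subgroups. -/
def projOfLE {H K : Subgroup G} (h : H ≤ K) : G ⧸ H → G ⧸ K :=
  Quotient.map' id fun a b hab => by
    rw [QuotientGroup.leftRel_apply] at hab ⊢
    exact h hab

/-- The odometer space for a (not necessarily normal) decreasing sequence of subgroups. -/
abbrev OdoSp (Γ : ℕ → Subgroup G) (hdec : ∀ n, Γ (n + 1) ≤ Γ n) : Type _ :=
  {x : ∀ n, G ⧸ Γ n // ∀ n, projOfLE (hdec n) (x (n + 1)) = x n}

/-- The bonding homomorphisms for a decreasing sequence of normal subgroups. -/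
def odoMap (Γ : ℕ → Subgroup G) [∀ n, (Γ n).Normal] (hdec : ∀ n, Γ (n + 1) ≤ Γ n) (n : ℕ) :
    G ⧸ Γ (n + 1) →* G ⧸ Γ n :=
  QuotientGroup.map _ _ (MonoidHom.id G) (hdec n)

/-- The odometer associated to a decreasing sequence of normal subgroups, as a subgroup of
the product of the finite quotients. -/
def Odo (Γ : ℕ → Subgroup G) [∀ n, (Γ n).Normal] (hdec : ∀ n, Γ (n + 1) ≤ Γ n) :
    Subgroup (∀ n, G ⧸ Γ n) where
  carrier := {x | ∀ n, odoMap Γ hdec n (x (n + 1)) = x n}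
  one_mem' := fun n => map_one _
  mul_mem' := fun {a b} ha hb n => by
    simp only [Pi.mul_apply, map_mul, ha n, hb n]
  inv_mem' := fun {a} ha n => by
    simp only [Pi.inv_apply, map_inv, ha n]

/-- The canonical homomorphism from `G` to its odometer. -/
def tau (Γ : ℕ → Subgroup G) [∀ n, (Γ n).Normal] (hdec : ∀ n, Γ (n + 1) ≤ Γ n) :
    G →* Odo Γ hdec where
  toFun g := ⟨fun n => QuotientGroup.mk g, fun n => rfl⟩
  map_one' := rfl
  map_mul' g₁ g₂ := rfl

/-- Cylinder set of level `n` through the coset `a`. -/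
def cyl (Γ : ℕ → Subgroup G) [∀ n, (Γ n).Normal] (hdec : ∀ n, Γ (n + 1) ≤ Γ n) (n : ℕ)
    (a : G ⧸ Γ n) : Set (Odo Γ hdec) :=
  {x | (x : ∀ k, G ⧸ Γ k) n = a}

/-- The metric on the odometer: `d(x,y) = 2^{-min{n : xₙ ≠ yₙ}}`. -/
def odoDist {Γ : ℕ → Subgroup G} [∀ n, (Γ n).Normal] {hdec : ∀ n, Γ (n + 1) ≤ Γ n}
    (x y : Odo Γ hdec) : ℝ :=
  letI := Classical.dec (x = y)
  if x = y then 0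
  else (1 / 2 : ℝ) ^ sInf {n : ℕ | (x : ∀ k, G ⧸ Γ k) n ≠ (y : ∀ k, G ⧸ Γ k) n}



/-- The group of self-homeomorphisms of a space, with `(f * g) x = f (g x)`. -/
instance homeoGroup (X : Type*) [TopologicalSpace X] : Group (X ≃ₜ X) where
  mul f g := g.trans f
  one := Homeomorph.refl X
  inv := Homeomorph.symm
  mul_assoc _ _ _ := Homeomorph.ext fun _ => rfl
  one_mul _ := Homeomorph.ext fun _ => rfl
  mul_one _ := Homeomorph.ext fun _ => rfl
  inv_mul_cancel f := Homeomorph.ext fun x => f.symm_apply_apply x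

theorem homeo_mul_apply {X : Type*} [TopologicalSpace X] (f g : X ≃ₜ X) (x : X) :
    (f * g) x = f (g x) := rfl

theorem homeo_inv_apply {X : Type*} [TopologicalSpace X] (f : X ≃ₜ X) (x : X) :
    f⁻¹ x = f.symm x := rfl

section Full

variable (X : Type*) [Group X] [TopologicalSpace X]

/-- Membership in the topological full group of the right translation action of `X`
on itself: on each piece of a finite clopen partition, `f` is a right translation. -/
def InFullR (f : X ≃ₜ X) : Prop :=
  ∃ ξ : X → X, IsLocallyConstant ξ ∧ (Set.range ξ).Finite ∧ ∀ x, f x = x * (ξ x)⁻¹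

/-- Membership in the topological full group of the left translation action. -/
def InFullL (f : X ≃ₜ X) : Prop :=
  ∃ ξ : X → X, IsLocallyConstant ξ ∧ (Set.range ξ).Finite ∧ ∀ x, f x = ξ x * x

/-- The topological full group `[[X]]_R` of the right translation action. -/
def TFGR : Subgroup (X ≃ₜ X) where
  carrier := {f | InFullR X f}
  one_mem' := ⟨fun _ => 1, IsLocallyConstant.const 1,
    (Set.finite_singleton 1).subset (Set.range_subset_iff.2 fun _ => rfl),
    fun x => by simp [homeo_mul_apply]⟩
  mul_mem' := by
    rintro f g ⟨ξf, hf1, hf2, hf3⟩ ⟨ξg, hg1, hg2, hg3⟩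
    refine ⟨fun x => ξf (g x) * ξg x,
      (hf1.comp_continuous g.continuous).mul hg1,
      (hf2.mul hg2).subset ?_, fun x => ?_⟩
    · rintro y ⟨x, rfl⟩
      exact Set.mul_mem_mul ⟨g x, rfl⟩ ⟨x, rfl⟩
    · show f (g x) = x * (ξf (g x) * ξg x)⁻¹
      rw [mul_inv_rev, ← mul_assoc, ← hg3 x, ← hf3 (g x)]
  inv_mem' := by
    rintro f ⟨ξ, h1, h2, h3⟩
    refine ⟨fun x => (ξ (f.symm x))⁻¹,
      (h1.comp_continuous f.symm.continuous).inv, (h2.inv).subset ?_, fun x => ?_⟩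
    · rintro y ⟨x, rfl⟩
      exact Set.inv_mem_inv.2 ⟨f.symm x, rfl⟩
    · have h := h3 (f.symm x)
      rw [f.apply_symm_apply] at h
      show f.symm x = x * ((ξ (f.symm x))⁻¹)⁻¹
      rw [inv_inv]
      exact (eq_mul_inv_iff_mul_eq.mp h).symm

/-- The topological full group `[[X]]_L` of the left translation action. -/
def TFGL : Subgroup (X ≃ₜ X) where
  carrier := {f | InFullL X f}
  one_mem' := ⟨fun _ => 1, IsLocallyConstant.const 1,
    (Set.finite_singleton 1).subset (Set.range_subset_iff.2 fun _ => rfl),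
    fun x => by simp⟩
  mul_mem' := by
    rintro f g ⟨ξf, hf1, hf2, hf3⟩ ⟨ξg, hg1, hg2, hg3⟩
    refine ⟨fun x => ξf (g x) * ξg x,
      (hf1.comp_continuous g.continuous).mul hg1,
      (hf2.mul hg2).subset ?_, fun x => ?_⟩
    · rintro y ⟨x, rfl⟩
      exact Set.mul_mem_mul ⟨g x, rfl⟩ ⟨x, rfl⟩
    · show f (g x) = ξf (g x) * ξg x * x
      rw [mul_assoc, ← hg3 x, ← hf3 (g x)]
  inv_mem' := by
    rintro f ⟨ξ, h1, h2, h3⟩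
    refine ⟨fun x => (ξ (f.symm x))⁻¹,
      (h1.comp_continuous f.symm.continuous).inv, (h2.inv).subset ?_, fun x => ?_⟩
    · rintro y ⟨x, rfl⟩
      exact Set.inv_mem_inv.2 ⟨f.symm x, rfl⟩
    · have h := h3 (f.symm x)
      rw [f.apply_symm_apply] at h
      show f.symm x = (ξ (f.symm x))⁻¹ * x
      exact eq_inv_mul_iff_mul_eq.mpr h.symm

/-- `f` commutes with left translation by every element of `S`. -/
def IsAutLOn (S : Set X) (f : X ≃ₜ X) : Prop :=
  ∀ s ∈ S, ∀ x, f (s * x) = s * f x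

theorem IsAutLOn.one (S : Set X) : IsAutLOn X S 1 := fun _ _ _ => rfl

theorem IsAutLOn.mul {S T : Set X} {f g : X ≃ₜ X} (hf : IsAutLOn X S f)
    (hg : IsAutLOn X T g) : IsAutLOn X (S ∩ T) (f * g) := fun s hs x => by
  rw [homeo_mul_apply, hg s hs.2, hf s hs.1, homeo_mul_apply]

theorem IsAutLOn.inv {S : Set X} {f : X ≃ₜ X} (hf : IsAutLOn X S f) :
    IsAutLOn X S f⁻¹ := fun s hs x => by
  rw [homeo_inv_apply]
  have h := hf s hs (f.symm x)
  rw [f.apply_symm_apply] at h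
  rw [← h, f.symm_apply_apply]
  rfl

/-- The group of automorphisms of the left translation action of `S ⊆ X` on `X`. -/
def AutLgrp (S : Set X) : Subgroup (X ≃ₜ X) where
  carrier := {f | IsAutLOn X S f}
  one_mem' := IsAutLOn.one X S
  mul_mem' := fun {f g} hf hg => by
    have := IsAutLOn.mul X (S := S) (T := S) hf hg
    simpa using this
  inv_mem' := fun {f} hf => IsAutLOn.inv X hf

end Full



section Stab
variable (X : Type*) [Group X] [TopologicalSpace X]

/-- A (finitely additive) invariant mean: the classical definition of amenability for
(discrete) groups. -/
def IsAmenable (Γ : Type*) [Group Γ] : Prop :=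
  ∃ m : Set Γ → ℝ, (∀ A, 0 ≤ m A) ∧ m Set.univ = 1 ∧
    (∀ A B, Disjoint A B → m (A ∪ B) = m A + m B) ∧
    ∀ (g : Γ) (A), m ((g * ·) '' A) = m A

/-- `C` is a minimal component for the left translation action of the subset `T ⊆ X`. -/
def IsMinCompL (T : Set X) (C : Set X) : Prop :=
  C.Nonempty ∧ IsClosed C ∧ (∀ t ∈ T, ∀ x ∈ C, t * x ∈ C) ∧
    ∀ x ∈ C, C ⊆ closure ((· * x) '' T)

/-- The subgroup `[[X]]_{U,L}` of homeomorphisms acting as a left translation on each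
left coset of `U`. -/
def fullUL (U : Subgroup X) : Subgroup (X ≃ₜ X) where
  carrier := {f | ∀ a : X, ∃ ξ : X, ∀ x : X,
    (QuotientGroup.mk x : X ⧸ U) = QuotientGroup.mk a → f x = ξ * x}
  one_mem' := fun a => ⟨1, fun x _ => (one_mul x).symm⟩
  mul_mem' := by
    intro f g hf hg a
    obtain ⟨ξg, hξg⟩ := hg a
    obtain ⟨ξf, hξf⟩ := hf (ξg * a)
    refine ⟨ξf * ξg, fun x hx => ?_⟩
    have hx' : (QuotientGroup.mk (ξg * x) : X ⧸ U) = QuotientGroup.mk (ξg * a) := by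
      rw [QuotientGroup.eq] at hx ⊢
      simpa [mul_assoc] using hx
    show f (g x) = ξf * ξg * x
    rw [hξg x hx, hξf (ξg * x) hx', mul_assoc]
  inv_mem' := by
    intro f hf a
    obtain ⟨ξ, hξ⟩ := hf (f.symm a)
    refine ⟨ξ⁻¹, fun x hx => ?_⟩
    have ha : f (f.symm a) = ξ * f.symm a := hξ _ rfl
    rw [f.apply_symm_apply] at ha
    have hx' : (QuotientGroup.mk (ξ⁻¹ * x) : X ⧸ U) = QuotientGroup.mk (f.symm a) := by
      rw [QuotientGroup.eq] at hx ⊢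
      have : f.symm a = ξ⁻¹ * a := eq_inv_mul_iff_mul_eq.mpr ha.symm
      rw [this]
      simpa [mul_assoc] using hx
    have := hξ (ξ⁻¹ * x) hx'
    rw [mul_inv_cancel_left] at this
    show f.symm x = ξ⁻¹ * x
    conv_lhs => rw [← this]
    rw [f.symm_apply_apply]
end Stab

section Full0
variable (X : Type*) [Group X] [TopologicalSpace X]

/-- The subgroup `[[X]]⁰_{U,L}` of elements of the topological full group preserving each
left coset `aU` and acting on it by left multiplication by an element of `aUa⁻¹`. -/
def full0L (U : Subgroup X) : Subgroup (X ≃ₜ X) where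
  carrier := {f | ∀ a : X, ∃ u ∈ U, ∀ x : X,
    (QuotientGroup.mk x : X ⧸ U) = QuotientGroup.mk a → f x = a * u * a⁻¹ * x}
  one_mem' := fun a => ⟨1, U.one_mem, fun x _ => by
    show x = a * 1 * a⁻¹ * x
    simp⟩
  mul_mem' := by
    intro f g hf hg a
    obtain ⟨ug, hugU, hg'⟩ := hg a
    obtain ⟨uf, hufU, hf'⟩ := hf a
    refine ⟨uf * ug, U.mul_mem hufU hugU, fun x hx => ?_⟩
    have hgx : (QuotientGroup.mk (g x) : X ⧸ U) = QuotientGroup.mk a := by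
      rw [hg' x hx]
      rw [QuotientGroup.eq] at hx ⊢
      have h : (a * ug * a⁻¹ * x)⁻¹ * a = x⁻¹ * a * ug⁻¹ := by group
      rw [h]
      exact U.mul_mem hx (U.inv_mem hugU)
    show f (g x) = a * (uf * ug) * a⁻¹ * x
    rw [hf' (g x) hgx, hg' x hx]
    group
  inv_mem' := by
    intro f hf a
    obtain ⟨u, huU, hu⟩ := hf a
    refine ⟨u⁻¹, U.inv_mem huU, fun x hx => ?_⟩
    have hx' : (QuotientGroup.mk (a * u⁻¹ * a⁻¹ * x) : X ⧸ U) = QuotientGroup.mk a := by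
      rw [QuotientGroup.eq] at hx ⊢
      have h : (a * u⁻¹ * a⁻¹ * x)⁻¹ * a = x⁻¹ * a * u := by group
      rw [h]
      exact U.mul_mem hx huU
    have h2 := hu _ hx'
    have h3 : f (a * u⁻¹ * a⁻¹ * x) = x := by rw [h2]; group
    show f.symm x = a * u⁻¹ * a⁻¹ * x
    conv_lhs => rw [← h3]
    rw [f.symm_apply_apply]

end Full0

section StabAut
variable {G : Type*} [Group G]

/-- The stabilized automorphism group of the (left) odometer: homeomorphisms commuting
with the left translation action of some finite-index subgroup of `G`. -/
def stabAut (Γ : ℕ → Subgroup G) [∀ n, (Γ n).Normal] (hdec : ∀ n, Γ (n + 1) ≤ Γ n) :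
    Subgroup (↥(Odo Γ hdec) ≃ₜ ↥(Odo Γ hdec)) where
  carrier := {f | ∃ H : Subgroup G, H.FiniteIndex ∧
    IsAutLOn _ (tau Γ hdec '' (H : Set G)) f}
  one_mem' := ⟨⊤, inferInstance, IsAutLOn.one _ _⟩
  mul_mem' := by
    rintro f g ⟨H₁, h₁, hf⟩ ⟨H₂, h₂, hg⟩
    haveI := h₁; haveI := h₂
    refine ⟨H₁ ⊓ H₂, inferInstance, ?_⟩
    rintro s ⟨γ, hγ, rfl⟩ x
    have hγ' := Subgroup.mem_inf.mp hγ
    rw [homeo_mul_apply, hg _ ⟨γ, hγ'.2, rfl⟩, hf _ ⟨γ, hγ'.1, rfl⟩, homeo_mul_apply]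
  inv_mem' := by
    rintro f ⟨H, h, hf⟩
    exact ⟨H, h, IsAutLOn.inv _ hf⟩

/-- The clopen subgroup `[1]_n` of the odometer (kernel of the projection to level `n`). -/
def levelKer (Γ : ℕ → Subgroup G) [∀ n, (Γ n).Normal] (hdec : ∀ n, Γ (n + 1) ≤ Γ n)
    (n : ℕ) : Subgroup ↥(Odo Γ hdec) :=
  ((Pi.evalMonoidHom (fun k => G ⧸ Γ k) n).comp (Odo Γ hdec).subtype).ker

end StabAut

section Adic

/-- The subgroups `m^n ℤ` of `ℤ`, multiplicatively. -/
def zmSub (m : ℕ) (n : ℕ) : Subgroup (Multiplicative ℤ) :=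
  Subgroup.closure {Multiplicative.ofAdd ((m : ℤ) ^ n)}

theorem zmdec (m : ℕ) : ∀ n, zmSub m (n + 1) ≤ zmSub m n := fun n => by
  rw [zmSub, Subgroup.closure_le]
  intro y hy
  rw [Set.mem_singleton_iff] at hy
  subst hy
  rw [SetLike.mem_coe, zmSub, Subgroup.mem_closure_singleton]
  refine ⟨(m : ℤ), ?_⟩
  rw [← ofAdd_zsmul]
  congr 1
  rw [smul_eq_mul, pow_succ]
  ring

/-- The `m`-adic odometer group `ℤ_m`, the inverse limit of `ℤ/m^nℤ`. -/
def Zm (m : ℕ) : Subgroup (∀ n, Multiplicative ℤ ⧸ zmSub m n) := Odo (zmSub m) (zmdec m)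

/-- The scale of `ℤ²` generated by `(p^n, 0)` and `(0, q^n)`, multiplicatively. -/
def zsqSub (p q : ℕ) (n : ℕ) : Subgroup (Multiplicative (ℤ × ℤ)) :=
  Subgroup.closure {Multiplicative.ofAdd ((((p : ℤ) ^ n, 0) : ℤ × ℤ)),
    Multiplicative.ofAdd ((((0 : ℤ), (q : ℤ) ^ n) : ℤ × ℤ))}

theorem zsqdec (p q : ℕ) : ∀ n, zsqSub p q (n + 1) ≤ zsqSub p q n := fun n => by
  rw [zsqSub, Subgroup.closure_le]
  intro y hy
  rw [Set.mem_insert_iff, Set.mem_singleton_iff] at hy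
  rcases hy with rfl | rfl
  · rw [SetLike.mem_coe]
    have h : (Multiplicative.ofAdd ((((p : ℤ) ^ n, 0) : ℤ × ℤ))) ^ ((p : ℕ) : ℤ) =
        Multiplicative.ofAdd ((((p : ℤ) ^ (n + 1), 0) : ℤ × ℤ)) := by
      rw [← ofAdd_zsmul]
      congr 1
      rw [Prod.smul_mk, smul_eq_mul, smul_eq_mul, pow_succ]
      simp [Prod.ext_iff]; ring
    rw [← h]
    exact Subgroup.zpow_mem _ (Subgroup.subset_closure (by simp [zsqSub])) _
  · rw [SetLike.mem_coe]
    have h : (Multiplicative.ofAdd ((((0 : ℤ), (q : ℤ) ^ n) : ℤ × ℤ))) ^ ((q : ℕ) : ℤ) =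
        Multiplicative.ofAdd ((((0 : ℤ), (q : ℤ) ^ (n + 1)) : ℤ × ℤ)) := by
      rw [← ofAdd_zsmul]
      congr 1
      rw [Prod.smul_mk, smul_eq_mul, smul_eq_mul, pow_succ]
      simp [Prod.ext_iff]; ring
    rw [← h]
    exact Subgroup.zpow_mem _ (Subgroup.subset_closure (by simp [zsqSub])) _

end Adic

/-- `C` is a minimal component of the action of the subgroup `H ≤ G` on `X` via `ρ`. -/
def IsMinCompAct {G X : Type*} [Group G] [TopologicalSpace X] (ρ : G →* (X ≃ₜ X))
    (H : Subgroup G) (C : Set X) : Prop :=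
  C.Nonempty ∧ IsClosed C ∧ (∀ h ∈ H, ∀ x ∈ C, ρ h x ∈ C) ∧
    ∀ x ∈ C, C ⊆ closure {y | ∃ h ∈ H, y = ρ h x}



section AuxAll


section Aux
variable (Γ : ℕ → Subgroup G) [∀ n, (Γ n).Normal] [∀ n, (Γ n).FiniteIndex]
  (hdec : ∀ n, Γ (n + 1) ≤ Γ n)

include hdec in
theorem gamma_antitone {m n : ℕ} (h : m ≤ n) : Γ n ≤ Γ m := by
  induction n with
  | zero => simpa [Nat.le_zero.mp h]
  | succ k ih =>
    rcases Nat.le_succ_iff.mp h with h' | h'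
    · exact le_trans (hdec k) (ih h')
    · simp [h']

theorem odo_prop (x : ↥(Odo Γ hdec)) (n : ℕ) :
    odoMap Γ hdec n (x.1 (n + 1)) = x.1 n := x.2 n

theorem agree_of_le (x y : ↥(Odo Γ hdec)) {m n : ℕ} (h : m ≤ n)
    (hxy : x.1 n = y.1 n) : x.1 m = y.1 m := by
  obtain ⟨d, rfl⟩ := Nat.exists_eq_add_of_le h
  clear h
  induction d with
  | zero => simpa using hxy
  | succ k ih =>
    apply ih
    rw [← odo_prop Γ hdec x (m + k), ← odo_prop Γ hdec y (m + k)]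
    exact congrArg _ hxy

instance instTG (n : ℕ) : IsTopologicalGroup (G ⧸ Γ n) where
  continuous_mul := continuous_of_discreteTopology
  continuous_inv := continuous_of_discreteTopology

example : IsTopologicalGroup (↥(Odo Γ hdec)) := inferInstance
example : T2Space (↥(Odo Γ hdec)) := inferInstance

theorem isClosed_odo : IsClosed ((Odo Γ hdec : Set (∀ n, G ⧸ Γ n))) := by
  have : (Odo Γ hdec : Set (∀ n, G ⧸ Γ n)) =
      ⋂ n, {x : ∀ k, G ⧸ Γ k | odoMap Γ hdec n (x (n + 1)) = x n} := by
    ext x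
    simp only [Set.mem_iInter, SetLike.mem_coe]
    rfl
  rw [this]
  exact isClosed_iInter fun n => isClosed_eq
    (continuous_of_discreteTopology.comp (continuous_apply (n + 1))) (continuous_apply n)

instance instCS : CompactSpace (↥(Odo Γ hdec)) :=
  isCompact_iff_compactSpace.mp ((isClosed_odo Γ hdec).isCompact)

theorem continuous_eval (n : ℕ) : Continuous (fun y : ↥(Odo Γ hdec) => y.1 n) :=
  (continuous_apply n).comp continuous_subtype_val

theorem isOpen_level (n : ℕ) (a : G ⧸ Γ n) :
    IsOpen {y : ↥(Odo Γ hdec) | y.1 n = a} :=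
  (isOpen_discrete {a}).preimage (continuous_eval Γ hdec n)

theorem isClosed_level (n : ℕ) (a : G ⧸ Γ n) :
    IsClosed {y : ↥(Odo Γ hdec) | y.1 n = a} :=
  (isClosed_discrete {a}).preimage (continuous_eval Γ hdec n)

theorem exists_level_subset (U : Set ↥(Odo Γ hdec)) (hU : IsOpen U)
    (x : ↥(Odo Γ hdec)) (hx : x ∈ U) :
    ∃ n, ∀ y : ↥(Odo Γ hdec), y.1 n = x.1 n → y ∈ U := by
  by_contra hcon
  push_neg at hcon
  choose w hw1 hw2 using hcon
  set t : ℕ → Set ↥(Odo Γ hdec) := fun n => {y | y.1 n = x.1 n} ∩ Uᶜ with ht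
  have htcl : ∀ n, IsClosed (t n) := fun n =>
    (isClosed_level Γ hdec n _).inter hU.isClosed_compl
  have htd : Directed (· ⊇ ·) t := fun a b => by
    refine ⟨max a b, fun y hy => ⟨?_, hy.2⟩, fun y hy => ⟨?_, hy.2⟩⟩
    · exact agree_of_le Γ hdec y x (le_max_left a b) hy.1
    · exact agree_of_le Γ hdec y x (le_max_right a b) hy.1
  have htn : ∀ n, (t n).Nonempty := fun n => ⟨w n, hw1 n, hw2 n⟩
  obtain ⟨y, hy⟩ := IsCompact.nonempty_iInter_of_directed_nonempty_isCompact_isClosed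
    t htd htn (fun n => (htcl n).isCompact) htcl
  have hyx : y = x := by
    apply Subtype.ext; funext n
    exact (Set.mem_iInter.mp hy n).1
  exact (Set.mem_iInter.mp hy 0).2 (hyx ▸ hx)

include hdec in
theorem exists_sup_stab (H : Subgroup G) [H.FiniteIndex] :
    ∃ m, ∀ n, Γ m ≤ H ⊔ Γ n := by
  have hfi : ∀ n, (H ⊔ Γ n).FiniteIndex := fun n => Subgroup.finiteIndex_of_le le_sup_left
  have hpos : ∀ n, 0 < (H ⊔ Γ n).index := fun n =>
    Nat.pos_of_ne_zero (hfi n).index_ne_zero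
  have hbdd : ∀ n, (H ⊔ Γ n).index ≤ H.index := fun n =>
    Nat.le_of_dvd (Nat.pos_of_ne_zero Subgroup.FiniteIndex.index_ne_zero)
      (Subgroup.index_dvd_of_le le_sup_left)
  have hne : (Set.range fun n => (H ⊔ Γ n).index).Nonempty := ⟨_, ⟨0, rfl⟩⟩
  have hbd : BddAbove (Set.range fun n => (H ⊔ Γ n).index) := by
    refine ⟨H.index, ?_⟩
    rintro _ ⟨n, rfl⟩
    exact hbdd n
  obtain ⟨m, hm⟩ := Nat.sSup_mem hne hbd
  refine ⟨m, fun n => ?_⟩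
  rcases le_total n m with h | h
  · exact le_trans (gamma_antitone Γ hdec h) le_sup_right
  · have hle : H ⊔ Γ n ≤ H ⊔ Γ m := sup_le_sup_left (gamma_antitone Γ hdec h) _
    have h1 : (H ⊔ Γ m).index ∣ (H ⊔ Γ n).index := Subgroup.index_dvd_of_le hle
    have h2 : (H ⊔ Γ n).index ≤ (H ⊔ Γ m).index := by
      calc (H ⊔ Γ n).index ≤ sSup (Set.range fun n => (H ⊔ Γ n).index) := le_csSup hbd ⟨n, rfl⟩
        _ = (H ⊔ Γ m).index := hm.symm
    have h3 : (H ⊔ Γ n).index = (H ⊔ Γ m).index :=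
      Nat.le_antisymm h2 (Nat.le_of_dvd (hpos n) h1)
    have h4 := Subgroup.relIndex_mul_index hle
    have h5 : (H ⊔ Γ n).relIndex (H ⊔ Γ m) = 1 := by
      have := h4.trans h3
      exact Nat.eq_of_mul_eq_mul_right (hpos m) (by rw [this, one_mul])
    have h6 : H ⊔ Γ m ≤ H ⊔ Γ n := Subgroup.relIndex_eq_one.mp h5
    exact le_trans le_sup_right h6

theorem approx_mem (H : Subgroup G) {m : ℕ} (hm : ∀ n, Γ m ≤ H ⊔ Γ n)
    (s : ↥(Odo Γ hdec)) (hs : s.1 m = 1) (k : ℕ) :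
    ∃ h ∈ H, (QuotientGroup.mk h : G ⧸ Γ k) = s.1 k := by
  rcases le_total k m with hkm | hmk
  · refine ⟨1, H.one_mem, ?_⟩
    have : s.1 k = (1 : ↥(Odo Γ hdec)).1 k :=
      agree_of_le Γ hdec s 1 hkm (by exact hs)
    simpa using this.symm
  · obtain ⟨g, hg⟩ := QuotientGroup.mk_surjective (s.1 k)
    have hsm : s.1 m = (tau Γ hdec g).1 m :=
      agree_of_le Γ hdec s (tau Γ hdec g) hmk hg.symm
    have hgm : g ∈ Γ m := by
      rw [← QuotientGroup.eq_one_iff]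
      exact (hsm.symm.trans hs :)
    have hsup : g ∈ H ⊔ Γ k := hm k hgm
    have hset : g ∈ (↑H * ↑(Γ k) : Set G) := by
      rw [← Subgroup.mul_normal H (Γ k)]
      exact hsup
    obtain ⟨h, hh, γ, hγ, rfl⟩ := hset
    refine ⟨h, hh, ?_⟩
    rw [← hg]
    rw [QuotientGroup.eq]
    simpa using (Γ k).inv_mem hγ

end Aux

section Main
variable (Γ : ℕ → Subgroup G) [∀ n, (Γ n).Normal] [∀ n, (Γ n).FiniteIndex]
  (hdec : ∀ n, Γ (n + 1) ≤ Γ n)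

theorem coord_mul (s x : ↥(Odo Γ hdec)) (n : ℕ) :
    (s * x).1 n = s.1 n * x.1 n := rfl

theorem coord_tau (g : G) (n : ℕ) :
    (tau Γ hdec g).1 n = (QuotientGroup.mk g : G ⧸ Γ n) := rfl

theorem tau_coord_one {n : ℕ} {γ : G} (hγ : γ ∈ Γ n) :
    (tau Γ hdec γ).1 n = 1 := by
  rw [coord_tau, QuotientGroup.eq_one_iff]
  exact hγ

/-- Key lemma: a stabilized automorphism commutes with left translation by the whole
clopen subgroup `[1]_n` for some `n`. -/
theorem stab_commute (f : ↥(Odo Γ hdec) ≃ₜ ↥(Odo Γ hdec)) (H : Subgroup G)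
    [H.FiniteIndex] (hf : IsAutLOn _ (tau Γ hdec '' (H : Set G)) f) :
    ∃ n, ∀ s : ↥(Odo Γ hdec), s.1 n = 1 → ∀ x, f (s * x) = s * f x := by
  obtain ⟨m, hm⟩ := exists_sup_stab Γ hdec H
  refine ⟨m, fun s hs => ?_⟩
  have hCclosed : IsClosed {t : ↥(Odo Γ hdec) | ∀ x, f (t * x) = t * f x} := by
    have heq : {t : ↥(Odo Γ hdec) | ∀ x, f (t * x) = t * f x}
        = ⋂ x, {t | f (t * x) = t * f x} := by
      ext t; simp only [Set.mem_iInter, Set.mem_setOf_eq]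
    rw [heq]
    refine isClosed_iInter fun x => isClosed_eq ?_ ?_
    · exact f.continuous.comp (continuous_mul_right x)
    · exact continuous_mul_right (f x)
  have hsub : tau Γ hdec '' (H : Set G) ⊆ {t | ∀ x, f (t * x) = t * f x} :=
    fun t ht x => hf t ht x
  have hcl : s ∈ closure (tau Γ hdec '' (H : Set G)) := by
    rw [mem_closure_iff]
    intro U hU hsU
    obtain ⟨k, hk⟩ := exists_level_subset Γ hdec U hU s hsU
    obtain ⟨h, hh, hhk⟩ := approx_mem Γ hdec H hm s hs k
    exact ⟨tau Γ hdec h, hk _ hhk, ⟨h, hh, rfl⟩⟩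
  exact closure_minimal hsub hCclosed hcl

/-- Uniform level for a locally constant function on the odometer. -/
theorem exists_uniform_level {Y : Type*} [TopologicalSpace Y]
    (ξ : ↥(Odo Γ hdec) → Y) (hlc : IsLocallyConstant ξ) :
    ∃ n, ∀ x y : ↥(Odo Γ hdec), y.1 n = x.1 n → ξ y = ξ x := by
  have hloc : ∀ x : ↥(Odo Γ hdec), ∃ k, ∀ y : ↥(Odo Γ hdec),
      y.1 k = x.1 k → ξ y = ξ x := fun x =>
    exists_level_subset Γ hdec {y | ξ y = ξ x} (hlc.isOpen_fiber (ξ x)) x rfl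
  choose k hk using hloc
  have hcov : (Set.univ : Set ↥(Odo Γ hdec)) ⊆
      ⋃ x : ↥(Odo Γ hdec), {y | y.1 (k x) = x.1 (k x)} := fun y _ =>
    Set.mem_iUnion.mpr ⟨y, rfl⟩
  obtain ⟨t, ht⟩ := isCompact_univ.elim_finite_subcover
    (fun x : ↥(Odo Γ hdec) => {y : ↥(Odo Γ hdec) | y.1 (k x) = x.1 (k x)})
    (fun x => isOpen_level Γ hdec (k x) _) hcov
  refine ⟨t.sup k, fun x y hxy => ?_⟩
  obtain ⟨i, hit, hix⟩ := Set.mem_iUnion₂.mp (ht (Set.mem_univ x))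
  have hki : k i ≤ t.sup k := Finset.le_sup hit
  have hyx : y.1 (k i) = x.1 (k i) := agree_of_le Γ hdec y x hki hxy
  have hy : y.1 (k i) = i.1 (k i) := hyx.trans hix
  rw [hk i y hy, hk i x hix]

end Main

end AuxAll

/-- `Aut^∞(X,G)_L = ⋃ₙ Aut(X,Γₙ)_L = [[X]]_R`. -/
theorem stmt17 {G : Type*} [Group G] (Γ : ℕ → Subgroup G) [∀ n, (Γ n).Normal]
    [∀ n, (Γ n).FiniteIndex] (hdec : ∀ n, Γ (n + 1) ≤ Γ n)
    (htriv : ∀ g : G, (∀ n, g ∈ Γ n) → g = 1) [Infinite G] :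
    ∀ f : ↥(Odo Γ hdec) ≃ₜ ↥(Odo Γ hdec),
      (f ∈ stabAut Γ hdec ↔ ∃ n, IsAutLOn ↥(Odo Γ hdec) (tau Γ hdec '' ((Γ n : Subgroup G) : Set G)) f) ∧
      (f ∈ stabAut Γ hdec ↔ f ∈ TFGR ↥(Odo Γ hdec)) := by
  intro f
  -- the key consequence of membership in `stabAut`
  have key : f ∈ stabAut Γ hdec →
      ∃ n, ∀ s : ↥(Odo Γ hdec), s.1 n = 1 → ∀ x, f (s * x) = s * f x := by
    rintro ⟨H, hHfi, hfH⟩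
    haveI := hHfi
    exact stab_commute Γ hdec f H hfH
  -- from the key property, `f` commutes with `τ(Γ n)`
  have ofKey : ∀ n, (∀ s : ↥(Odo Γ hdec), s.1 n = 1 → ∀ x, f (s * x) = s * f x) →
      IsAutLOn ↥(Odo Γ hdec) (tau Γ hdec '' ((Γ n : Subgroup G) : Set G)) f := by
    intro n hn
    rintro s ⟨γ, hγ, rfl⟩ x
    exact hn (tau Γ hdec γ) (tau_coord_one Γ hdec hγ) x
  have mem_of_aut : ∀ n, IsAutLOn ↥(Odo Γ hdec)
      (tau Γ hdec '' ((Γ n : Subgroup G) : Set G)) f → f ∈ stabAut Γ hdec :=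
    fun n h => ⟨Γ n, inferInstance, h⟩
  constructor
  · constructor
    · intro hf
      obtain ⟨n, hn⟩ := key hf
      exact ⟨n, ofKey n hn⟩
    · rintro ⟨n, hn⟩
      exact mem_of_aut n hn
  · constructor
    · -- stabAut → TFGR
      intro hf
      obtain ⟨n, hn⟩ := key hf
      classical
      set ξ : ↥(Odo Γ hdec) → ↥(Odo Γ hdec) := fun x => (f x)⁻¹ * x with hξdef
      have hcoset : ∀ x y : ↥(Odo Γ hdec), y.1 n = x.1 n → ξ y = ξ x := by
        intro x y hxy
        have hs : (y * x⁻¹).1 n = 1 := by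
          have : (y * x⁻¹).1 n = y.1 n * (x.1 n)⁻¹ := rfl
          rw [this, hxy, mul_inv_cancel]
        have hyx : y = (y * x⁻¹) * x := by group
        have hfy : f y = (y * x⁻¹) * f x := by
          conv_lhs => rw [hyx]
          exact hn (y * x⁻¹) hs x
        show (f y)⁻¹ * y = (f x)⁻¹ * x
        rw [hfy]
        conv_lhs => rw [hyx]
        group
      refine ⟨ξ, ?_, ?_, ?_⟩
      · rw [IsLocallyConstant.iff_exists_open]
        intro x
        exact ⟨{y | y.1 n = x.1 n}, isOpen_level Γ hdec n _, rfl,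
          fun y hy => hcoset x y hy⟩
      · -- finite range
        set e : ↥(Odo Γ hdec) → G ⧸ Γ n := fun x => x.1 n with he
        set F : G ⧸ Γ n → ↥(Odo Γ hdec) := Function.extend e ξ (fun _ => 1) with hF
        have hFe : ∀ x, F (e x) = ξ x := by
          intro x
          rw [hF, Function.extend_def]
          rw [dif_pos ⟨x, rfl⟩]
          exact hcoset x _ (Classical.choose_spec (⟨x, rfl⟩ : ∃ a, e a = e x))
        have : Set.range ξ ⊆ Set.range F := by
          rintro _ ⟨x, rfl⟩
          exact ⟨e x, hFe x⟩
        exact (Set.finite_range F).subset this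
      · intro x
        show f x = x * ((f x)⁻¹ * x)⁻¹
        group
    · -- TFGR → stabAut
      intro hf
      obtain ⟨ξ, hlc, hfin, hfx⟩ := hf
      obtain ⟨n, hn⟩ := exists_uniform_level Γ hdec ξ hlc
      refine mem_of_aut n ?_
      rintro s ⟨γ, hγ, rfl⟩ x
      have hcoord : (tau Γ hdec γ * x).1 n = x.1 n := by
        rw [coord_mul, tau_coord_one Γ hdec hγ, one_mul]
      rw [hfx (tau Γ hdec γ * x), hfx x, hn x _ hcoord, mul_assoc]

end OdoPaper
end
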